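/- Let ν be a concave admissible profile, finite and real-valued on [α_min, ∞), with conjugate η(p) := inf_{α ≥ α_min}(αp - ν(α) + 1) and dual profile ν'. Define η'(p') := (p'-1)(1 - η(p'/(p'-1))) + 1 for p' > 1. Then for every α' ∈ [α'_min, α'_max), ν'(α') = sup_{p' > 1}(α' p' - η'(p') + 1). -/

import Mathlib

noncomputable section
open Filter Set Topology

/-- Clamp an extended real into `{-∞} ∪ [0,1]`. -/
def clamp (b : EReal) : EReal := if b < 0 then ⊥ else min b 1

/-- The dual profile `ν'(α') = ⌊⌊ α' + inf{α : ν(α) - α > α'} ⌋⌋` (with `inf ∅ = +∞`). -/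
def dualProfile (ν : ℝ → EReal) (a' : ℝ) : EReal :=
  clamp ((a' : EReal) +
    sInf ((fun a : ℝ => (a : EReal)) '' {a : ℝ | (a' : EReal) < ν a - (a : EReal)}))

lemma clamp_nonneg_iff (b : EReal) : 0 ≤ clamp b ↔ 0 ≤ b := by
  unfold clamp
  split_ifs with h
  · constructor
    · intro hb; exact absurd hb (by simp)
    · intro hb; exact absurd hb (not_le.2 h)
  · push_neg at h
    constructor
    · intro _; exact h
    · intro hb; exact le_min hb zero_le_one

lemma clamp_eq_one_iff (b : EReal) : clamp b = 1 ↔ 1 ≤ b := by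
  unfold clamp
  split_ifs with h
  · constructor
    · intro hb; exact absurd hb (EReal.coe_one ▸ (EReal.bot_lt_coe 1).ne)
    · intro hb; exact absurd (lt_of_le_of_lt hb h) (not_lt.2 zero_le_one)
  · constructor
    · intro hb; rw [← hb]; exact min_le_left _ _
    · intro hb; rw [min_eq_right hb]

lemma ecoe_le_of_forall {x : ℝ} {y : EReal} (h : ∀ ε : ℝ, 0 < ε → ((x - ε : ℝ) : EReal) ≤ y) :
    (x : EReal) ≤ y := by
  by_contra hlt
  push_neg at hlt
  have hbot : (⊥ : EReal) < y := lt_of_lt_of_le (EReal.bot_lt_coe (x-1)) (h 1 one_pos)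
  have htop : y < ⊤ := lt_of_lt_of_le hlt (le_top)
  obtain ⟨r, rfl⟩ : ∃ r : ℝ, y = (r : EReal) := ⟨y.toReal, (EReal.coe_toReal htop.ne hbot.ne').symm⟩
  have : x ≤ r := by
    refine le_of_forall_pos_le_add fun ε hε => ?_
    have := h ε hε
    rw [EReal.coe_le_coe_iff] at this
    linarith
  exact absurd hlt (not_lt.2 (EReal.coe_le_coe_iff.2 this))

set_option maxHeartbeats 1000000 in
theorem stmt13 (ν : ℝ → EReal)
    (hmono : Monotone ν)
    (hrc : ∀ a : ℝ, ContinuousWithinAt ν (Set.Ici a) a)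
    (hval : ∀ a : ℝ, ν a = ⊥ ∨ (0 ≤ ν a ∧ ν a ≤ 1))
    (αmin : ℝ)
    (hbot : ∀ a : ℝ, ν a = ⊥ ↔ a < αmin)
    (hconc : ConcaveOn ℝ (Set.Ici αmin) (fun a => (ν a).toReal))
    (η : ℝ → ℝ)
    (hη : ∀ p : ℝ, 0 < p →
      IsGLB {v : ℝ | ∃ a : ℝ, αmin ≤ a ∧ v = a * p - (ν a).toReal + 1} (η p)) :
    ∀ α' : ℝ,
      sInf ((fun a : ℝ => (a : EReal)) '' {a' : ℝ | 0 ≤ dualProfile ν a'}) ≤ (α' : EReal) →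
      (α' : EReal) < sInf ((fun a : ℝ => (a : EReal)) '' {a' : ℝ | dualProfile ν a' = 1}) →
      dualProfile ν α' =
        sSup ((fun p' : ℝ =>
          ((α' * p' - ((p' - 1) * (1 - η (p' / (p' - 1))) + 1) + 1 : ℝ) : EReal)) ''
            Set.Ioi (1 : ℝ)) := by
  intro α' hge hlt
  set f : ℝ → ℝ := fun a => (ν a).toReal with hfdef
  have hf01 : ∀ a : ℝ, 0 ≤ f a ∧ f a ≤ 1 := by
    intro a
    rcases hval a with h | ⟨h0, h1⟩
    · constructor <;> simp [hfdef, h]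
    · have hnb : ν a ≠ ⊥ := fun hb => by rw [hb] at h0; exact absurd h0 (by simp)
      by_cases hT : ν a = ⊤
      · constructor <;> simp [hfdef, hT]
      · constructor
        · have := EReal.toReal_le_toReal h0 (by simp) hT
          simpa using this
        · have := EReal.toReal_le_toReal h1 hnb (EReal.coe_one ▸ EReal.coe_ne_top 1)
          simpa using this
  have hcoe : ∀ a : ℝ, αmin ≤ a → ν a = ((f a : ℝ) : EReal) := by
    intro a ha
    have hnb : ν a ≠ ⊥ := fun hb => absurd ((hbot a).1 hb) (not_lt.2 ha)
    rcases hval a with h | ⟨h0, h1⟩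
    · exact absurd h hnb
    · have hnt : ν a ≠ ⊤ := by
        intro ht
        rw [ht] at h1
        exact absurd h1 (not_le.2 (EReal.coe_one ▸ EReal.coe_lt_top 1))
      exact (EReal.coe_toReal hnt hnb).symm
  have memS : ∀ β a : ℝ, ((β : EReal) < ν a - (a : EReal)) ↔ (αmin ≤ a ∧ β < f a - a) := by
    intro β a
    constructor
    · intro h
      have hnb : ν a ≠ ⊥ := by
        intro hb
        rw [hb, EReal.bot_sub] at h
        exact absurd h (by simp)
      have ha : αmin ≤ a := not_lt.1 (fun hl => hnb ((hbot a).2 hl))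
      rw [hcoe a ha, ← EReal.coe_sub] at h
      exact ⟨ha, EReal.coe_lt_coe_iff.1 h⟩
    · rintro ⟨ha, h⟩
      rw [hcoe a ha, ← EReal.coe_sub]
      exact EReal.coe_lt_coe_iff.2 h
  set g : ℝ → EReal := fun β => (β : EReal) +
      sInf ((fun a : ℝ => (a : EReal)) '' {a : ℝ | (β : EReal) < ν a - (a : EReal)}) with hgdef
  have hdual : ∀ β : ℝ, dualProfile ν β = clamp (g β) := fun β => rfl
  have gmono : Monotone g := by
    intro β γ hbg
    refine add_le_add (EReal.coe_le_coe_iff.2 hbg) (sInf_le_sInf ?_)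
    exact image_mono (fun a ha => lt_of_le_of_lt (EReal.coe_le_coe_iff.2 hbg) ha)
  have hposγ : ∀ γ : ℝ, α' < γ → 0 ≤ g γ := by
    intro γ hγ
    have h1 : sInf ((fun a : ℝ => (a : EReal)) '' {a' : ℝ | 0 ≤ dualProfile ν a'}) < (γ : EReal) :=
      lt_of_le_of_lt hge (EReal.coe_lt_coe_iff.2 hγ)
    rw [sInf_lt_iff] at h1
    obtain ⟨x, hx, hxγ⟩ := h1
    obtain ⟨β, hβ, rfl⟩ := hx
    have hβγ : β ≤ γ := le_of_lt (EReal.coe_lt_coe_iff.1 hxγ)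
    have hβ' : (0 : EReal) ≤ clamp (g β) := hβ
    rw [clamp_nonneg_iff] at hβ'
    exact le_trans hβ' (gmono hβγ)
  have hSlb : ∀ a : ℝ, (α' : EReal) < ν a - (a : EReal) → -α' ≤ a := by
    intro a haS
    obtain ⟨ha, hfa⟩ := (memS α' a).1 haS
    refine le_of_forall_pos_le_add fun ε hε => ?_
    set γ := min (α' + ε) ((α' + (f a - a)) / 2) with hγdef
    have hγ1 : α' < γ := lt_min (by linarith) (by linarith)
    have hγ2 : γ < f a - a := lt_of_le_of_lt (min_le_right _ _) (by linarith)
    have hγ3 : γ ≤ α' + ε := min_le_left _ _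
    have h4 : sInf ((fun a : ℝ => (a : EReal)) '' {a : ℝ | (γ : EReal) < ν a - (a : EReal)})
        ≤ (a : EReal) := sInf_le ⟨a, (memS γ a).2 ⟨ha, hγ2⟩, rfl⟩
    have h5 : (0 : EReal) ≤ ((γ + a : ℝ) : EReal) := by
      refine le_trans (hposγ γ hγ1) ?_
      rw [EReal.coe_add]
      exact add_le_add le_rfl h4
    rw [EReal.coe_nonneg] at h5
    linarith
  set AE := sInf ((fun a : ℝ => (a : EReal)) ''
      {a : ℝ | (α' : EReal) < ν a - (a : EReal)}) with hAEdef
  have hgα : g α' = (α' : EReal) + AE := rfl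
  have hAge : (0 : EReal) ≤ g α' := by
    have h6 : ((-α' : ℝ) : EReal) ≤ AE :=
      le_sInf (by rintro x ⟨a, ha, rfl⟩; exact EReal.coe_le_coe_iff.2 (hSlb a ha))
    calc (0 : EReal) = ((α' + -α' : ℝ) : EReal) := by norm_num
    _ = (α' : EReal) + ((-α' : ℝ) : EReal) := EReal.coe_add _ _
    _ ≤ g α' := by rw [hgα]; exact add_le_add le_rfl h6
  have hAlt1 : g α' < 1 := by
    by_contra hcon
    push_neg at hcon
    have hmem1 : α' ∈ {a' : ℝ | dualProfile ν a' = 1} := by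
      rw [mem_setOf_eq, hdual, clamp_eq_one_iff]; exact hcon
    have hmem2 : ((α' : ℝ) : EReal) ∈
        (fun a : ℝ => (a : EReal)) '' {a' : ℝ | dualProfile ν a' = 1} := ⟨α', hmem1, rfl⟩
    exact absurd (sInf_le hmem2) (not_le.2 hlt)
  have hAnt : AE ≠ ⊤ := by
    intro h
    rw [hgα, h, EReal.coe_add_top] at hAlt1
    exact absurd hAlt1 (by simp)
  have hAnb : AE ≠ ⊥ := by
    have h7 : ((αmin : ℝ) : EReal) ≤ AE :=
      le_sInf (by rintro x ⟨a, ha, rfl⟩; exact EReal.coe_le_coe_iff.2 ((memS α' a).1 ha).1)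
    intro h
    rw [h, le_bot_iff] at h7
    exact (EReal.coe_ne_bot αmin) h7
  set Ar := AE.toReal with hArdef
  have hAE : AE = (Ar : EReal) := (EReal.coe_toReal hAnt hAnb).symm
  have hgval : g α' = ((α' + Ar : ℝ) : EReal) := by rw [hgα, hAE, EReal.coe_add]
  have h0le : 0 ≤ α' + Ar := EReal.coe_nonneg.1 (by rw [← hgval]; exact hAge)
  have hlt1 : α' + Ar < 1 := by
    have h8 := hAlt1
    rw [hgval] at h8
    exact_mod_cast h8
  have hSne : ∃ a0 : ℝ, (α' : EReal) < ν a0 - (a0 : EReal) := by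
    by_contra hcon
    push_neg at hcon
    apply hAnt
    rw [hAEdef, show {a : ℝ | (α' : EReal) < ν a - (a : EReal)} = ∅ from
      eq_empty_iff_forall_notMem.2 (fun a ha => absurd ha (not_lt.2 (hcon a))),
      image_empty, sInf_empty]
  obtain ⟨a0, ha0S⟩ := hSne
  have hlbAr : ∀ a : ℝ, (α' : EReal) < ν a - (a : EReal) → Ar ≤ a := by
    intro a ha
    have h9 : AE ≤ (a : EReal) := sInf_le ⟨a, ha, rfl⟩
    rw [hAE] at h9
    exact EReal.coe_le_coe_iff.1 h9
  have hglbAr : ∀ b : ℝ, (∀ a : ℝ, (α' : EReal) < ν a - (a : EReal) → b ≤ a) → b ≤ Ar := by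
    intro b hb
    have h9 : ((b : ℝ) : EReal) ≤ AE :=
      le_sInf (by rintro x ⟨a, ha, rfl⟩; exact EReal.coe_le_coe_iff.2 (hb a ha))
    rw [hAE] at h9
    exact EReal.coe_le_coe_iff.1 h9
  have hnotS : ∀ a : ℝ, αmin ≤ a → a < Ar → f a - a ≤ α' := by
    intro a ha hlt'
    by_contra hcon
    push_neg at hcon
    exact absurd (hlbAr a ((memS α' a).2 ⟨ha, hcon⟩)) (not_le.2 hlt')
  have ha0' := (memS α' a0).1 ha0S
  have ha0min : αmin ≤ a0 := ha0'.1
  have ha0f : α' < f a0 - a0 := ha0'.2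
  have ha0Ar : Ar ≤ a0 := hlbAr a0 ha0S
  have hLHS : dualProfile ν α' = ((α' + Ar : ℝ) : EReal) := by
    rw [hdual, hgval]
    unfold clamp
    rw [if_neg (not_lt.2 (EReal.coe_nonneg.2 h0le))]
    exact min_eq_left (by exact_mod_cast le_of_lt hlt1)
  -- upper bound
  have hupper : ∀ p' : ℝ, 1 < p' →
      α' * p' - ((p' - 1) * (1 - η (p' / (p' - 1))) + 1) + 1 ≤ α' + Ar := by
    intro p' hp
    set t := p' - 1 with htdef
    have ht : 0 < t := by rw [htdef]; linarith
    set q := p' / t with hqdef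
    have hq : 0 < q := div_pos (by linarith) ht
    have htq : t * q = p' := by rw [hqdef]; field_simp
    have hp1 : p' = t + 1 := by rw [htdef]; ring
    have hb : ∀ a : ℝ, (α' : EReal) < ν a - (a : EReal) →
        α' * p' - (t * (1 - η q) + 1) + 1 ≤ α' + a := by
      intro a ha
      obtain ⟨hamin, haf⟩ := (memS α' a).1 ha
      have hmem : η q ≤ a * q - f a + 1 := (hη q hq).1 ⟨a, hamin, rfl⟩
      have h2 : t * η q ≤ t * (a * q - f a + 1) := mul_le_mul_of_nonneg_left hmem ht.le
      have e2 : t * (a * q - f a + 1) = a * (t * q) - t * f a + t := by ring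
      rw [e2, htq, hp1] at h2
      have h4 : α' + a ≤ f a := by linarith
      have h5 : t * (α' + a) ≤ t * f a := mul_le_mul_of_nonneg_left h4 ht.le
      have e3 : α' * p' - (t * (1 - η q) + 1) + 1 = α' * t + α' - t + t * η q := by
        rw [hp1]; ring
      rw [e3]
      nlinarith [h2, h5]
    have h5 : α' * p' - (t * (1 - η q) + 1) + 1 - α' ≤ Ar :=
      hglbAr _ (fun a ha => by linarith [hb a ha])
    linarith
  -- lower bound
  have hlower : ∀ ε : ℝ, 0 < ε → ∃ p' : ℝ, 1 < p' ∧
      α' + Ar - ε ≤ α' * p' - ((p' - 1) * (1 - η (p' / (p' - 1))) + 1) + 1 := by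
    intro ε hε
    obtain ⟨K, hKpos, hKline⟩ : ∃ K : ℝ, 0 < K ∧
        ∀ a : ℝ, αmin ≤ a → f a - a - α' ≤ K * (a - Ar + ε) := by
      by_cases hcase : αmin < Ar - ε
      · -- case 2: genuine left part, use concavity
        set m := Ar - ε with hmdef
        have hthree : ∀ a b : ℝ, αmin ≤ a → a < m → m < b → αmin ≤ b →
            (f b - b - α') * (m - a) ≤ (α' + a - f a) * (b - m) := by
          intro a b ha ham hmb hbmin
          have hba : (0:ℝ) < b - a := by linarith
          have hl1 : (0:ℝ) ≤ (b - m) / (b - a) := div_nonneg (by linarith) (by linarith)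
          have hl2 : (0:ℝ) ≤ (m - a) / (b - a) := div_nonneg (by linarith) (by linarith)
          have hsum : (b - m) / (b - a) + (m - a) / (b - a) = 1 := by field_simp; ring
          have hcomb : ((b - m) / (b - a)) • a + ((m - a) / (b - a)) • b = m := by
            simp only [smul_eq_mul]; field_simp; ring
          have hcc := hconc.2 (mem_Ici.2 ha) (mem_Ici.2 hbmin) hl1 hl2 hsum
          rw [hcomb] at hcc
          simp only [smul_eq_mul] at hcc
          have hfm : f m - m - α' ≤ 0 := by
            have := hnotS m (le_of_lt hcase) (by linarith [hmdef])
            linarith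
          have h6 := mul_le_mul_of_nonneg_left hcc hba.le
          have e7 : (b - a) * ((b - m) / (b - a) * f a + (m - a) / (b - a) * f b)
              = (b - m) * f a + (m - a) * f b := by field_simp
          rw [e7] at h6
          have h8 : (b - a) * f m ≤ (b - a) * (m + α') :=
            mul_le_mul_of_nonneg_left (by linarith) hba.le
          nlinarith [h6, h8]
        have hma0 : m < a0 := by linarith [hmdef]
        set SL : Set ℝ := {s : ℝ | ∃ a : ℝ, αmin ≤ a ∧ a < m ∧ s = (α' + a - f a) / (m - a)}
          with hSLdef
        have hSLne : SL.Nonempty := ⟨(α' + αmin - f αmin) / (m - αmin),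
          ⟨αmin, le_refl _, hcase, rfl⟩⟩
        have hrs : 0 < (f a0 - a0 - α') / (a0 - m) := div_pos (by linarith) (by linarith)
        have hSLlb : ∀ s ∈ SL, (f a0 - a0 - α') / (a0 - m) ≤ s := by
          rintro s ⟨a, ha, ham, rfl⟩
          rw [div_le_div_iff₀ (by linarith) (by linarith)]
          exact hthree a a0 ha ham hma0 ha0min
        set K := sInf SL with hKdef
        have hKpos : 0 < K := lt_of_lt_of_le hrs (le_csInf hSLne hSLlb)
        refine ⟨K, hKpos, ?_⟩
        intro a ha
        have hgoal : a - Ar + ε = a - m := by rw [hmdef]; ring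
        rw [hgoal]
        rcases lt_trichotomy a m with ham | ham | ham
        · have h9 : K ≤ (α' + a - f a) / (m - a) :=
            csInf_le ⟨(f a0 - a0 - α') / (a0 - m), fun s hs => hSLlb s hs⟩ ⟨a, ha, ham, rfl⟩
          rw [le_div_iff₀ (by linarith)] at h9
          nlinarith [h9]
        · have h10 := hnotS a ha (by linarith [hmdef])
          have h11 : K * (a - m) = 0 := by rw [ham]; ring
          linarith
        · rcases lt_or_ge a Ar with har | har
          · have h10 := hnotS a ha har
            have h11 : 0 ≤ K * (a - m) := mul_nonneg hKpos.le (by linarith)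
            linarith
          · have hlb2 : ∀ s ∈ SL, (f a - a - α') / (a - m) ≤ s := by
              rintro s ⟨a', ha', ham', rfl⟩
              rw [div_le_div_iff₀ (by linarith) (by linarith)]
              exact hthree a' a ha' ham' ham ha
            have h10 : (f a - a - α') / (a - m) ≤ K := le_csInf hSLne hlb2
            rw [div_le_iff₀ (by linarith)] at h10
            exact h10
      · -- case 1: αmin ≥ Ar - ε
        push_neg at hcase
        refine ⟨max 1 ((1 - α' - Ar) / ε), lt_of_lt_of_le one_pos (le_max_left _ _), ?_⟩
        intro a ha
        by_cases har : a < Ar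
        · have h1 : f a - a - α' ≤ 0 := by linarith [hnotS a ha har]
          have h2 : 0 ≤ a - Ar + ε := by linarith
          exact le_trans h1 (mul_nonneg (le_trans zero_le_one (le_max_left _ _)) h2)
        · push_neg at har
          have h1 : f a - a - α' ≤ 1 - Ar - α' := by linarith [(hf01 a).2]
          have h2 : ε ≤ a - Ar + ε := by linarith
          have h3 : (1 - α' - Ar) / ε * ε ≤ max 1 ((1 - α' - Ar) / ε) * (a - Ar + ε) :=
            mul_le_mul (le_max_right _ _) h2 hε.le (le_trans zero_le_one (le_max_left _ _))
          rw [div_mul_cancel₀ _ hε.ne'] at h3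
          linarith
    -- use K to pick p'
    set t := 1 / K with htdef
    have ht : 0 < t := by rw [htdef]; positivity
    have hKt : t * K = 1 := by rw [htdef]; field_simp
    refine ⟨1 + t, by linarith, ?_⟩
    have e1 : (1 + t) - 1 = t := by ring
    rw [e1]
    set q := (1 + t) / t with hqdef
    have hq : 0 < q := div_pos (by linarith) ht
    have hL : ∀ v ∈ {v : ℝ | ∃ a : ℝ, αmin ≤ a ∧ v = a * q - f a + 1},
        (Ar - ε) / t + 1 - α' ≤ v := by
      rintro v ⟨a, ha, rfl⟩
      have hline := hKline a ha
      have hmul : t * (f a - a - α') ≤ a - Ar + ε := by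
        calc t * (f a - a - α') ≤ t * (K * (a - Ar + ε)) :=
              mul_le_mul_of_nonneg_left hline ht.le
        _ = (t * K) * (a - Ar + ε) := by ring
        _ = a - Ar + ε := by rw [hKt]; ring
      rw [← mul_le_mul_iff_right₀ ht]
      have e4 : t * ((Ar - ε) / t + 1 - α') = (Ar - ε) + t - t * α' := by
        field_simp
      have e5 : t * (a * q - f a + 1) = a * (1 + t) - t * f a + t := by
        rw [hqdef]; field_simp
      rw [e4, e5]
      nlinarith [hmul]
    have hηq : (Ar - ε) / t + 1 - α' ≤ η q := (hη q hq).2 hL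
    have h12 : t * ((Ar - ε) / t + 1 - α') ≤ t * η q := mul_le_mul_of_nonneg_left hηq ht.le
    have e4 : t * ((Ar - ε) / t + 1 - α') = (Ar - ε) + t - t * α' := by field_simp
    rw [e4] at h12
    nlinarith [h12]
  -- assemble
  rw [hLHS]
  apply le_antisymm
  · apply ecoe_le_of_forall
    intro ε hε
    obtain ⟨p', hp, hEp⟩ := hlower ε hε
    have hmem3 : ((α' * p' - ((p' - 1) * (1 - η (p' / (p' - 1))) + 1) + 1 : ℝ) : EReal) ∈
        (fun p' : ℝ =>
          ((α' * p' - ((p' - 1) * (1 - η (p' / (p' - 1))) + 1) + 1 : ℝ) : EReal)) ''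
            Set.Ioi (1 : ℝ) := mem_image_of_mem _ hp
    exact le_trans (EReal.coe_le_coe_iff.2 (by linarith)) (le_sSup hmem3)
  · apply sSup_le
    rintro x ⟨p', hp, rfl⟩
    exact EReal.coe_le_coe_iff.2 (hupper p' hp)
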